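/- (Lemma 4.2, case N = K) Let S ≥ 2 and N = K ≥ 2 be integers, let q = Σ_{k=1}^{N} Σ_{s=1}^{S} C(N,k)·ψ_s(S,k), let M = (N·S^{N−1} − q)/(K·S^{N−1}), and let R = q/S^{N−1}. Then for every t ∈ {1,…,K}, with R_t = min( N·(1 − t/K), ((K−t)/(t+1))·Σ_{i=0}^{N−1} S^{−i} ), one has N − (K/(tN))·(N − R_t)·M > R; that is, the memory–rate point (M,R) of the proposed scheme lies strictly below the line through (0,N) and (tN/K, R_t). -/

import Mathlib

/-- Pair `(g S k, f S k)` defined by the recurrence: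
`g(S,1)=1, f(S,1)=0`, and for `k ≥ 2`,
`g(S,k)=(S−1)·f(S,k−1)`, `f(S,k)=(S−2)·f(S,k−1)+g(S,k−1)`. -/
def gfAux (S : ℕ) : ℕ → ℤ × ℤ
  | 0 => (0, 0)
  | 1 => (1, 0)
  | (k+2) => (((S : ℤ) - 1) * (gfAux S (k+1)).2,
              ((S : ℤ) - 2) * (gfAux S (k+1)).2 + (gfAux S (k+1)).1)

def g (S k : ℕ) : ℤ := (gfAux S k).1
def f (S k : ℕ) : ℤ := (gfAux S k).2

/-- `φ_s(S,k)`: `g(S,k)` if `s = 1`, else `f(S,k)`. -/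
def phi (S s k : ℕ) : ℤ := if s = 1 then g S k else f S k

/-- `ψ_s(S,k) = ⌈(k(N−1)/N)·φ_s(S,k)⌉`. -/
def psi (S N s k : ℕ) : ℤ := ⌈((k : ℚ) * ((N : ℚ) - 1) / (N : ℚ)) * ((phi S s k : ℚ))⌉

/-- `q = Σ_{k=1}^{N} Σ_{s=1}^{S} C(N,k)·ψ_s(S,k)`. -/
def qTotal (S N : ℕ) : ℤ :=
  ∑ k ∈ Finset.Icc 1 N, ∑ s ∈ Finset.Icc 1 S, (N.choose k : ℤ) * psi S N s k

lemma gfAux_nonneg (S : ℕ) (hS : 2 ≤ S) : ∀ k, 0 ≤ (gfAux S k).1 ∧ 0 ≤ (gfAux S k).2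
  | 0 => by simp [gfAux]
  | 1 => by simp [gfAux]
  | (k+2) => by
    obtain ⟨h1, h2⟩ := gfAux_nonneg S hS (k+1)
    have hs : (2:ℤ) ≤ (S:ℤ) := by exact_mod_cast hS
    constructor
    · simp only [gfAux]; nlinarith
    · simp only [gfAux]; nlinarith

lemma phi_nonneg (S s k : ℕ) (hS : 2 ≤ S) : 0 ≤ phi S s k := by
  unfold phi g f
  split <;> [exact (gfAux_nonneg S hS k).1; exact (gfAux_nonneg S hS k).2]

lemma gf_sum (S : ℕ) : ∀ k, g S (k+1) + ((S:ℤ) - 1) * f S (k+1) = ((S:ℤ)-1)^k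
  | 0 => by simp [g, f, gfAux]
  | (k+1) => by
    have ih := gf_sum S k
    simp only [g, f, gfAux] at ih ⊢
    rw [pow_succ]
    linear_combination ((S:ℤ)-1) * ih

lemma sum_phi (S : ℕ) (hS : 2 ≤ S) (k : ℕ) :
    ∑ s ∈ Finset.Icc 1 S, phi S s k = g S k + ((S:ℤ) - 1) * f S k := by
  have h1 : Finset.Icc 1 S = insert 1 (Finset.Icc 2 S) := by
    ext x; simp; omega
  rw [h1, Finset.sum_insert (by simp)]
  have h2 : ∑ s ∈ Finset.Icc 2 S, phi S s k = ∑ s ∈ Finset.Icc 2 S, f S k := by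
    apply Finset.sum_congr rfl
    intro x hx
    simp only [Finset.mem_Icc] at hx
    unfold phi
    rw [if_neg (by omega)]
  rw [h2, Finset.sum_const, Nat.card_Icc, phi, if_pos rfl, nsmul_eq_mul]
  have : ((S + 1 - 2 : ℕ) : ℤ) = (S:ℤ) - 1 := by omega
  rw [this]

lemma sum_phi' (S : ℕ) (hS : 2 ≤ S) (k : ℕ) (hk : 1 ≤ k) :
    ∑ s ∈ Finset.Icc 1 S, phi S s k = ((S:ℤ)-1)^(k-1) := by
  rw [sum_phi S hS k]
  have := gf_sum S (k-1)
  rwa [show k - 1 + 1 = k from by omega] at this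

lemma psi_nonneg (S N s k : ℕ) (hS : 2 ≤ S) (hN : 1 ≤ N) : 0 ≤ psi S N s k := by
  apply Int.ceil_nonneg
  have h1 : (0:ℚ) ≤ (phi S s k : ℚ) := by exact_mod_cast phi_nonneg S s k hS
  have h2 : (1:ℚ) ≤ (N:ℚ) := by exact_mod_cast hN
  have h3 : (0:ℚ) ≤ (k:ℚ) := by positivity
  exact mul_nonneg (div_nonneg (mul_nonneg h3 (by linarith)) (by linarith)) h1

lemma psi_le (S N s k : ℕ) (hS : 2 ≤ S) (hN : 1 ≤ N) : psi S N s k ≤ k * phi S s k := by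
  unfold psi
  rw [Int.ceil_le]
  push_cast
  have h1 : (0:ℚ) ≤ (phi S s k : ℚ) := by exact_mod_cast phi_nonneg S s k hS
  have h2 : (1:ℚ) ≤ (N:ℚ) := by exact_mod_cast hN
  have h3 : (0:ℚ) ≤ (k:ℚ) := by positivity
  rw [div_mul_eq_mul_div, div_le_iff₀ (by linarith)]
  nlinarith

lemma psi_top (S N s : ℕ) (hN : 1 ≤ N) : psi S N s N = ((N:ℤ) - 1) * phi S s N := by
  unfold psi
  have h2 : (0:ℚ) < (N:ℚ) := by exact_mod_cast hN
  have e1 : (N : ℚ) * ((N : ℚ) - 1) / (N : ℚ) = ((N:ℚ) - 1) := by field_simp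
  rw [e1, show ((N:ℚ) - 1) * (phi S s N : ℚ) = ((((N:ℤ) - 1) * phi S s N : ℤ) : ℚ) from by
    push_cast; ring, Int.ceil_intCast]

lemma binom_id (S N : ℕ) (hN : 1 ≤ N) :
    ∑ k ∈ Finset.Icc 1 N, (N.choose k : ℤ) * k * ((S:ℤ)-1)^(k-1)
      = (N:ℤ) * (S:ℤ)^(N-1) := by
  rw [show Finset.Icc 1 N = Finset.Ico 1 (N+1) from by rw [Finset.Ico_add_one_right_eq_Icc],
    Finset.sum_Ico_eq_sum_range]
  have hre : N + 1 - 1 = N := by omega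
  rw [hre]
  have step : ∀ j ∈ Finset.range N,
      (N.choose (1+j) : ℤ) * ((1+j : ℕ) : ℤ) * ((S:ℤ)-1)^(1+j-1)
        = (N:ℤ) * (((N-1).choose j : ℤ) * ((S:ℤ)-1)^j) := by
    intro j _
    have h1 : 1 + j - 1 = j := by omega
    rw [h1]
    have h2 : N - 1 + 1 = N := by omega
    have hmc := Nat.add_one_mul_choose_eq (N-1) j
    rw [h2] at hmc
    have hcast : (N:ℤ) * ((N-1).choose j : ℤ) = (N.choose (j+1) : ℤ) * (j+1 : ℕ) := by
      exact_mod_cast congrArg (Nat.cast : ℕ → ℤ) hmc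
    push_cast at hcast ⊢
    rw [add_comm 1 (j:ℤ), add_comm 1 j]
    linear_combination (-((S:ℤ)-1)^j) * hcast
  rw [Finset.sum_congr rfl step, ← Finset.mul_sum]
  congr 1
  have hbin := add_pow ((S:ℤ)-1) 1 (N-1)
  have hre2 : N - 1 + 1 = N := by omega
  rw [hre2] at hbin
  simp only [one_pow, mul_one] at hbin
  rw [show ((S:ℤ))^(N-1) = ((S:ℤ)-1+1)^(N-1) from by norm_num, hbin]
  exact Finset.sum_congr rfl (fun i _ => mul_comm _ _)

lemma qTotal_nonneg (S N : ℕ) (hS : 2 ≤ S) (hN : 1 ≤ N) : 0 ≤ qTotal S N := by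
  apply Finset.sum_nonneg
  intro k _
  apply Finset.sum_nonneg
  intro s _
  exact mul_nonneg (by positivity) (psi_nonneg S N s k hS hN)

lemma qTotal_lt (S N : ℕ) (hS : 2 ≤ S) (hN : 2 ≤ N) :
    qTotal S N < (N:ℤ) * (S:ℤ)^(N-1) := by
  have hN1 : 1 ≤ N := by omega
  have hs1 : (1:ℤ) ≤ (S:ℤ) - 1 := by
    have : (2:ℤ) ≤ (S:ℤ) := by exact_mod_cast hS
    linarith
  -- term bounds
  set A : ℕ → ℤ := fun k => ∑ s ∈ Finset.Icc 1 S, (N.choose k : ℤ) * psi S N s k with hA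
  set B : ℕ → ℤ := fun k => (N.choose k : ℤ) * k * ((S:ℤ)-1)^(k-1) with hB
  have hAB : ∀ k ∈ Finset.Icc 1 N, A k ≤ B k := by
    intro k hk
    simp only [Finset.mem_Icc] at hk
    simp only [hA, hB, ← Finset.mul_sum]
    rw [mul_assoc]
    apply mul_le_mul_of_nonneg_left _ (by positivity)
    calc ∑ s ∈ Finset.Icc 1 S, psi S N s k
        ≤ ∑ s ∈ Finset.Icc 1 S, (k:ℤ) * phi S s k :=
          Finset.sum_le_sum (fun s _ => psi_le S N s k hS hN1)
      _ = (k:ℤ) * ((S:ℤ)-1)^(k-1) := by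
          rw [← Finset.mul_sum, sum_phi' S hS k hk.1]
  have hAN : A N = ((N:ℤ) - 1) * ((S:ℤ)-1)^(N-1) := by
    simp only [hA]
    have : ∀ s ∈ Finset.Icc 1 S, (N.choose N : ℤ) * psi S N s N
        = ((N:ℤ) - 1) * phi S s N := by
      intro s _
      rw [Nat.choose_self, psi_top S N s hN1]
      push_cast; ring
    rw [Finset.sum_congr rfl this, ← Finset.mul_sum, sum_phi' S hS N hN1]
  have hBN : B N = (N:ℤ) * ((S:ℤ)-1)^(N-1) := by
    simp only [hB, Nat.choose_self]; push_cast; ring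
  have hmem : N ∈ Finset.Icc 1 N := by simp; omega
  have hsplitA : qTotal S N = A N + ∑ k ∈ (Finset.Icc 1 N).erase N, A k :=
    (Finset.add_sum_erase _ A hmem).symm
  have hsplitB : (N:ℤ) * (S:ℤ)^(N-1) = B N + ∑ k ∈ (Finset.Icc 1 N).erase N, B k := by
    rw [← binom_id S N hN1]
    exact (Finset.add_sum_erase _ B hmem).symm
  have hrest : ∑ k ∈ (Finset.Icc 1 N).erase N, A k ≤ ∑ k ∈ (Finset.Icc 1 N).erase N, B k :=
    Finset.sum_le_sum (fun k hk => hAB k (Finset.mem_of_mem_erase hk))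
  have hpow : (1:ℤ) ≤ ((S:ℤ)-1)^(N-1) := one_le_pow₀ hs1
  linarith

lemma main_ineq (Nq tq Pq qq Rt : ℚ) (hN : 2 ≤ Nq) (ht1 : 1 ≤ tq)
    (hP : 0 < Pq) (hq0 : 0 ≤ qq) (hq : qq < Nq*Pq) (hRt0 : 0 ≤ Rt)
    (hpos : 0 < Nq*(tq-1) + Rt) :
    Nq - (Nq/(tq*Nq)) * (Nq - Rt) * ((Nq*Pq - qq)/(Nq*Pq)) > qq/Pq := by
  have hNpos : (0:ℚ) < Nq := by linarith
  have htpos : (0:ℚ) < tq := by linarith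
  have heq : Nq - (Nq/(tq*Nq)) * (Nq - Rt) * ((Nq*Pq - qq)/(Nq*Pq)) - qq/Pq
      = ((Nq*Pq - qq) * (Nq*(tq-1) + Rt)) / (tq*Nq*Pq) := by
    field_simp
    ring
  have h2 : 0 < ((Nq*Pq - qq) * (Nq*(tq-1) + Rt)) / (tq*Nq*Pq) :=
    div_pos (mul_pos (by linarith) hpos) (by positivity)
  linarith [heq ▸ h2]

theorem lemma4_2_N_eq_K (S N K : ℕ) (hS : 2 ≤ S) (hN : 2 ≤ N) (hNK : N = K)
    (t : ℕ) (ht : t ∈ Finset.Icc 1 K) :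
    let q : ℚ := (qTotal S N : ℚ)
    let M : ℚ := ((N : ℚ) * (S : ℚ) ^ (N - 1) - q) / ((K : ℚ) * (S : ℚ) ^ (N - 1))
    let R : ℚ := q / (S : ℚ) ^ (N - 1)
    let Rt : ℚ := min ((N : ℚ) * (1 - (t : ℚ) / (K : ℚ)))
      ((((K : ℚ) - (t : ℚ)) / ((t : ℚ) + 1)) * ∑ i ∈ Finset.range N, ((S : ℚ) ^ i)⁻¹)
    (N : ℚ) - ((K : ℚ) / ((t : ℚ) * (N : ℚ))) * ((N : ℚ) - Rt) * M > R := by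
  subst hNK
  intro q M R Rt
  rw [Finset.mem_Icc] at ht
  obtain ⟨ht1, ht2⟩ := ht
  have hNQ : (2:ℚ) ≤ (N:ℚ) := by exact_mod_cast hN
  have htQ1 : (1:ℚ) ≤ (t:ℚ) := by exact_mod_cast ht1
  have htQ2 : (t:ℚ) ≤ (N:ℚ) := by exact_mod_cast ht2
  have hSQ : (0:ℚ) < (S:ℚ) := by exact_mod_cast (by omega : 0 < S)
  have hPpos : (0:ℚ) < (S:ℚ)^(N-1) := pow_pos hSQ _
  have hN0 : (N:ℚ) ≠ 0 := by linarith
  have hq0 : (0:ℚ) ≤ (qTotal S N : ℚ) := by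
    exact_mod_cast qTotal_nonneg S N hS (by omega)
  have hqlt : (qTotal S N : ℚ) < (N:ℚ) * (S:ℚ)^(N-1) := by
    exact_mod_cast qTotal_lt S N hS hN
  have hmin1 : (N:ℚ) * (1 - (t:ℚ)/(N:ℚ)) = (N:ℚ) - (t:ℚ) := by field_simp
  have hsum_pos : 0 < ∑ i ∈ Finset.range N, ((S:ℚ)^i)⁻¹ :=
    Finset.sum_pos (fun i _ => by positivity) (Finset.nonempty_range_iff.mpr (by omega))
  have hRt0 : (0:ℚ) ≤ Rt :=
    le_min (by rw [hmin1]; linarith)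
      (mul_nonneg (div_nonneg (by linarith) (by linarith)) hsum_pos.le)
  have hpos : 0 < (N:ℚ)*((t:ℚ)-1) + Rt := by
    by_cases h1 : t = 1
    · subst h1
      have hRtpos : (0:ℚ) < Rt :=
        lt_min (by rw [hmin1]; push_cast; linarith)
          (mul_pos (div_pos (by push_cast; linarith) (by push_cast; linarith)) hsum_pos)
      push_cast
      linarith
    · have h2 : (2:ℚ) ≤ (t:ℚ) := by exact_mod_cast (by omega : 2 ≤ t)
      nlinarith
  exact main_ineq (N:ℚ) (t:ℚ) ((S:ℚ)^(N-1)) (qTotal S N : ℚ) Rt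
    hNQ htQ1 hPpos hq0 hqlt hRt0 hpos
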